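/- A ring R is right SSP if and only if it is left SSP. That is, the sum of any two direct summands of R as a right R-module is a direct summand if and only if the sum of any two direct summands of R as a left R-module is a direct summand. -/

import Mathlib

def IsSummand {R M : Type*} [Ring R] [AddCommGroup M] [Module R M]
    (p : Submodule R M) : Prop :=
  ∃ q : Submodule R M, IsCompl p q

section Lattice

variable {R M : Type*} [Ring R] [AddCommGroup M] [Module R M]

/-- If `IsCompl A A'` and `N ≤ A'`, then `A ⊔ N` is a summand iff `N` is. -/
lemma isSummand_sup_iff {A A' N : Submodule R M} (h : IsCompl A A') (hN : N ≤ A') :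
    IsSummand (A ⊔ N) ↔ IsSummand N := by
  constructor
  · rintro ⟨C, hC⟩
    refine ⟨A ⊔ A' ⊓ (A ⊔ C), ⟨?_, ?_⟩⟩
    · -- Disjoint N (A ⊔ A' ⊓ (A ⊔ C))
      have h1 : N ⊓ (A ⊔ C) ≤ A := by
        have e1 : (A ⊔ N) ⊓ (A ⊔ C) = A ⊔ N ⊓ (A ⊔ C) :=
          sup_inf_assoc_of_le N le_sup_left
        have e2 : (A ⊔ C) ⊓ (A ⊔ N) = A ⊔ C ⊓ (A ⊔ N) :=
          sup_inf_assoc_of_le C le_sup_left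
        have e3 : C ⊓ (A ⊔ N) = ⊥ := by
          rw [inf_comm]; exact hC.disjoint.eq_bot
        have e4 : A ⊔ N ⊓ (A ⊔ C) = A := by
          rw [← e1, inf_comm, e2, e3, sup_bot_eq]
        exact le_sup_right.trans e4.le
      rw [disjoint_iff, eq_bot_iff]
      calc N ⊓ (A ⊔ A' ⊓ (A ⊔ C)) ≤ N ⊓ (A ⊔ C) := by
            apply inf_le_inf_left
            exact sup_le le_sup_left inf_le_right
      _ ≤ A ⊓ A' := le_inf h1 (inf_le_left.trans hN)
      _ = ⊥ := h.disjoint.eq_bot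
    · -- Codisjoint
      have h2 : N ⊔ A' ⊓ (A ⊔ C) = A' := by
        have e1 : (N ⊔ (A ⊔ C)) ⊓ A' = N ⊔ (A ⊔ C) ⊓ A' :=
          sup_inf_assoc_of_le (A ⊔ C) hN
        have e2 : N ⊔ (A ⊔ C) = ⊤ := by
          rw [← sup_assoc, sup_comm N A, hC.codisjoint.eq_top]
        rw [inf_comm A', ← e1, e2, top_inf_eq]
      rw [codisjoint_iff]
      calc N ⊔ (A ⊔ A' ⊓ (A ⊔ C)) = A ⊔ (N ⊔ A' ⊓ (A ⊔ C)) := by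
            rw [← sup_assoc, sup_comm N A, sup_assoc]
      _ = A ⊔ A' := by rw [h2]
      _ = ⊤ := h.codisjoint.eq_top
  · rintro ⟨C, hC⟩
    refine ⟨A' ⊓ C, ⟨?_, ?_⟩⟩
    · rw [disjoint_iff]
      have h1 : (N ⊔ A) ⊓ A' = N := by
        rw [sup_inf_assoc_of_le A hN, h.disjoint.eq_bot, sup_bot_eq]
      calc (A ⊔ N) ⊓ (A' ⊓ C) = ((A ⊔ N) ⊓ A') ⊓ C := by rw [inf_assoc]
      _ = N ⊓ C := by rw [sup_comm A N, h1]
      _ = ⊥ := hC.disjoint.eq_bot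
    · rw [codisjoint_iff]
      have h2 : N ⊔ A' ⊓ C = A' := by
        have e1 : (N ⊔ C) ⊓ A' = N ⊔ C ⊓ A' := sup_inf_assoc_of_le C hN
        rw [inf_comm A', ← e1, hC.codisjoint.eq_top, top_inf_eq]
      calc A ⊔ N ⊔ A' ⊓ C = A ⊔ (N ⊔ A' ⊓ C) := by rw [sup_assoc]
      _ = A ⊔ A' := by rw [h2]
      _ = ⊤ := h.codisjoint.eq_top

end Lattice

section Ring

variable {A : Type*} [Ring A]

lemma mem_spanL {a x : A} : x ∈ Submodule.span A {a} ↔ ∃ c : A, c * a = x := by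
  exact Submodule.mem_span_singleton

/-- An idempotent generates a summand left ideal. -/
lemma isCompl_span_idem {e : A} (he : IsIdempotentElem e) :
    IsCompl (Submodule.span A {e}) (Submodule.span A {1 - e}) := by
  constructor
  · rw [disjoint_iff, eq_bot_iff]
    rintro x ⟨hx1, hx2⟩
    obtain ⟨r, hr⟩ := mem_spanL.mp hx1
    obtain ⟨s, hs⟩ := mem_spanL.mp hx2
    have h1 : x * e = x := by rw [← hr, mul_assoc, he.eq]
    have h2 : x * e = 0 := by
      rw [← hs, mul_assoc, sub_mul, one_mul, he.eq, sub_self, mul_zero]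
    rw [Submodule.mem_bot, ← h1, h2]
  · rw [codisjoint_iff, eq_top_iff]
    intro x _
    have hmem : x * e + x * (1 - e) ∈
        Submodule.span A {e} ⊔ Submodule.span A {1 - e} :=
      Submodule.add_mem _
        (Submodule.mem_sup_left (mem_spanL.mpr ⟨x, rfl⟩))
        (Submodule.mem_sup_right (mem_spanL.mpr ⟨x, rfl⟩))
    have heq : x * e + x * (1 - e) = x := by noncomm_ring
    simpa [heq] using hmem

lemma isSummand_span_idem {e : A} (he : IsIdempotentElem e) :
    IsSummand (Submodule.span A {e}) :=
  ⟨_, isCompl_span_idem he⟩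

/-- A summand left ideal is generated by an idempotent. -/
lemma isSummand_iff_idem {p : Submodule A A} :
    IsSummand p ↔ ∃ e : A, IsIdempotentElem e ∧ p = Submodule.span A {e} := by
  constructor
  · rintro ⟨q, hq⟩
    have h1 : (1 : A) ∈ p ⊔ q := by rw [hq.codisjoint.eq_top]; trivial
    obtain ⟨e, he, f, hf, hef⟩ := Submodule.mem_sup.mp h1
    have key : ∀ x ∈ p, x * e = x := by
      intro x hx
      have hxe : x * e ∈ p := p.smul_mem x he
      have hxf : x * f ∈ q := q.smul_mem x hf
      have hxf' : x * f ∈ p := by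
        have hsum : x * e + x * f = x := by rw [← mul_add, hef, mul_one]
        have : x * f = x - x * e := eq_sub_of_add_eq' hsum
        rw [this]; exact p.sub_mem hx hxe
      have : x * f ∈ p ⊓ q := ⟨hxf', hxf⟩
      rw [hq.disjoint.eq_bot, Submodule.mem_bot] at this
      have hx' : x * (e + f) = x := by rw [hef, mul_one]
      rw [mul_add, this, add_zero] at hx'
      exact hx'
    refine ⟨e, key e he, le_antisymm ?_ ?_⟩
    · intro x hx
      exact mem_spanL.mpr ⟨x, key x hx⟩
    · rw [Submodule.span_le, Set.singleton_subset_iff]; exact he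
  · rintro ⟨e, he, rfl⟩
    exact isSummand_span_idem he

/-- `Aa` is a summand iff `a` is von Neumann regular. -/
lemma isSummand_span_iff_regular {a : A} :
    IsSummand (Submodule.span A {a}) ↔ ∃ b : A, a = a * b * a := by
  constructor
  · intro h
    obtain ⟨e, he, hp⟩ := isSummand_iff_idem.mp h
    have ha : a ∈ Submodule.span A {e} := hp ▸ Submodule.mem_span_singleton_self a
    obtain ⟨c, hc⟩ := mem_spanL.mp ha
    have heA : e ∈ Submodule.span A {a} := by
      rw [hp]; exact Submodule.mem_span_singleton_self e
    obtain ⟨b, hb⟩ := mem_spanL.mp heA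
    refine ⟨b, ?_⟩
    have hae : a * e = a := by rw [← hc, mul_assoc, he.eq]
    rw [mul_assoc, hb, hae]
  · rintro ⟨b, hb⟩
    have hg : IsIdempotentElem (b * a) := by
      unfold IsIdempotentElem
      calc b * a * (b * a) = b * (a * b * a) := by
            rw [mul_assoc, ← mul_assoc a b a]
      _ = b * a := by rw [← hb]
    have hspan : Submodule.span A {a} = Submodule.span A {b * a} := by
      apply le_antisymm
      · rw [Submodule.span_le, Set.singleton_subset_iff]
        refine mem_spanL.mpr ⟨a, ?_⟩
        rw [← mul_assoc, ← hb]
      · rw [Submodule.span_le, Set.singleton_subset_iff]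
        exact mem_spanL.mpr ⟨b, rfl⟩
    rw [hspan]
    exact isSummand_span_idem hg

lemma sup_span_eq {e f : A} :
    Submodule.span A {e} ⊔ Submodule.span A {f}
      = Submodule.span A {e} ⊔ Submodule.span A {f * (1 - e)} := by
  apply le_antisymm
  · apply sup_le le_sup_left
    rw [Submodule.span_le, Set.singleton_subset_iff]
    have hmem : f * (1 - e) + f * e ∈
        Submodule.span A {e} ⊔ Submodule.span A {f * (1 - e)} :=
      Submodule.add_mem _
        (Submodule.mem_sup_right (Submodule.mem_span_singleton_self _))
        (Submodule.mem_sup_left (mem_spanL.mpr ⟨f, rfl⟩))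
    have heq : f * (1 - e) + f * e = f := by noncomm_ring
    simpa [heq] using hmem
  · apply sup_le le_sup_left
    rw [Submodule.span_le, Set.singleton_subset_iff]
    have hmem : f - f * e ∈
        Submodule.span A {e} ⊔ Submodule.span A {f} :=
      Submodule.sub_mem _
        (Submodule.mem_sup_right (Submodule.mem_span_singleton_self _))
        (Submodule.mem_sup_left (mem_spanL.mpr ⟨f, rfl⟩))
    have heq : f * (1 - e) = f - f * e := by noncomm_ring
    rw [heq]
    exact hmem

/-- Left SSP is equivalent to a regularity condition on products of idempotents. -/
lemma ssp_iff_regular :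
    (∀ p q : Submodule A A, IsSummand p → IsSummand q → IsSummand (p ⊔ q)) ↔
    (∀ e f : A, IsIdempotentElem e → IsIdempotentElem f →
      ∃ b : A, f * e = f * e * b * (f * e)) := by
  constructor
  · intro h e f he hf
    have h1e : IsIdempotentElem (1 - e) := he.one_sub
    have := h _ _ (isSummand_span_idem h1e) (isSummand_span_idem hf)
    have hsup : Submodule.span A {1 - e} ⊔ Submodule.span A {f}
        = Submodule.span A {1 - e} ⊔ Submodule.span A {f * e} := by
      rw [sup_span_eq, sub_sub_cancel]
    rw [hsup] at this
    have hcompl : IsCompl (Submodule.span A {1 - e}) (Submodule.span A {e}) := by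
      have := isCompl_span_idem h1e
      rwa [sub_sub_cancel] at this
    have hle : Submodule.span A {f * e} ≤ Submodule.span A {e} := by
      rw [Submodule.span_le, Set.singleton_subset_iff]
      exact mem_spanL.mpr ⟨f, rfl⟩
    rw [isSummand_sup_iff hcompl hle] at this
    obtain ⟨b, hb⟩ := isSummand_span_iff_regular.mp this
    exact ⟨b, by rw [← mul_assoc] at hb ⊢; exact hb⟩
  · intro h p q hp hq
    obtain ⟨e, he, rfl⟩ := isSummand_iff_idem.mp hp
    obtain ⟨f, hf, rfl⟩ := isSummand_iff_idem.mp hq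
    rw [sup_span_eq]
    have hcompl := isCompl_span_idem he
    have hle : Submodule.span A {f * (1 - e)} ≤ Submodule.span A {1 - e} := by
      rw [Submodule.span_le, Set.singleton_subset_iff]
      exact mem_spanL.mpr ⟨f, rfl⟩
    rw [isSummand_sup_iff hcompl hle]
    obtain ⟨b, hb⟩ := h (1 - e) f he.one_sub hf
    exact isSummand_span_iff_regular.mpr ⟨b, by rw [← mul_assoc] at hb ⊢; exact hb⟩

end Ring

section Transport

variable {R : Type*} [Ring R]

lemma isSummand_map_iff {M N : Type*} [AddCommGroup M] [Module R M]
    [AddCommGroup N] [Module R N] (σ : Submodule R M ≃o Submodule R N)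
    (p : Submodule R M) : IsSummand (σ p) ↔ IsSummand p := by
  constructor
  · rintro ⟨q, hq⟩
    exact ⟨σ.symm q, by simpa using σ.isCompl_iff.mpr (by simpa using hq)⟩
  · rintro ⟨q, hq⟩
    exact ⟨σ q, σ.isCompl_iff.mp hq⟩

end Transport

/-- `R` is right SSP iff `R` is left SSP. -/
theorem stmt4 {R : Type*} [Ring R] :
    (∀ p q : Submodule Rᵐᵒᵖ R, IsSummand p → IsSummand q → IsSummand (p ⊔ q)) ↔
    (∀ p q : Submodule R R, IsSummand p → IsSummand q → IsSummand (p ⊔ q)) := by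
  let σ : Submodule Rᵐᵒᵖ R ≃o Submodule Rᵐᵒᵖ Rᵐᵒᵖ :=
    Submodule.orderIsoMapComap (MulOpposite.opLinearEquiv Rᵐᵒᵖ)
  have step1 : (∀ p q : Submodule Rᵐᵒᵖ R, IsSummand p → IsSummand q → IsSummand (p ⊔ q)) ↔
      (∀ p q : Submodule Rᵐᵒᵖ Rᵐᵒᵖ, IsSummand p → IsSummand q → IsSummand (p ⊔ q)) := by
    constructor
    · intro h p q hp hq
      have := h (σ.symm p) (σ.symm q) ((isSummand_map_iff σ _).mp (by simpa using hp))
        ((isSummand_map_iff σ _).mp (by simpa using hq))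
      have h2 := (isSummand_map_iff σ _).mpr this
      rwa [map_sup, σ.apply_symm_apply, σ.apply_symm_apply] at h2
    · intro h p q hp hq
      have := h (σ p) (σ q) ((isSummand_map_iff σ _).mpr hp) ((isSummand_map_iff σ _).mpr hq)
      rw [← map_sup] at this
      exact (isSummand_map_iff σ _).mp this
  rw [step1, ssp_iff_regular, ssp_iff_regular]
  constructor
  · intro h e f he hf
    obtain ⟨b, hb⟩ := h (MulOpposite.op f) (MulOpposite.op e)
      (by simpa [IsIdempotentElem] using congrArg MulOpposite.op hf.eq)
      (by simpa [IsIdempotentElem] using congrArg MulOpposite.op he.eq)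
    refine ⟨b.unop, ?_⟩
    have := congrArg MulOpposite.unop hb
    simpa [mul_assoc] using this
  · intro h e f he hf
    obtain ⟨b, hb⟩ := h f.unop e.unop
      (by simpa [IsIdempotentElem] using congrArg MulOpposite.unop hf.eq)
      (by simpa [IsIdempotentElem] using congrArg MulOpposite.unop he.eq)
    refine ⟨MulOpposite.op b, ?_⟩
    have := congrArg MulOpposite.op hb
    simpa [mul_assoc] using this
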